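/- Define Γ^0 := {T ∈ 𝒢^× : T 𝒢^0 T^{-1} ⊆ 𝒢^0}, Γ^n := {T ∈ 𝒢^× : T 𝒢^n T^{-1} ⊆ 𝒢^n}, Γ̌^0 := {T ∈ 𝒢^× : T̂ 𝒢^0 T^{-1} ⊆ 𝒢^0}, and Γ̌^n := {T ∈ 𝒢^× : T̂ 𝒢^n T^{-1} ⊆ 𝒢^n}. Then: Γ^0 = 𝒢^×; Γ^n = 𝒢^× if n is odd and Γ^n = (𝒢^{(0)×} ∪ 𝒢^{(1)×})(𝒢^0 + rad 𝒢)^× if n is even; Γ̌^0 = 𝒢^{(0)×} ∪ 𝒢^{(1)×}; and Γ̌^n = (𝒢^{(0)×} ∪ 𝒢^{(1)×})(𝒢^0 + rad 𝒢)^× if n is odd and Γ̌^n = 𝒢^× if n is even. -/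

import Mathlib

open Pointwise

noncomputable section

namespace ClGA

variable (𝔽 : Type*) [RCLike 𝔽] (p q r : ℕ)

/-- The diagonal weights: `p` ones, `q` minus-ones, `r` zeros. -/
def w : Fin (p + q + r) → 𝔽 := fun i =>
  if (i : ℕ) < p then 1 else if (i : ℕ) < p + q then -1 else 0

/-- The quadratic form on `𝔽^n` whose Gram matrix is `diag(1,…,1,−1,…,−1,0,…,0)`. -/
def Q : QuadraticForm 𝔽 (Fin (p + q + r) → 𝔽) :=
  QuadraticMap.weightedSumSquares 𝔽 (w 𝔽 p q r)

/-- The degenerate Clifford geometric algebra `𝒢 = 𝒢_{p,q,r}`. -/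
abbrev G := CliffordAlgebra (Q 𝔽 p q r)

/-- The generators `e_a`, `a = 1, …, n`. -/
def e (a : Fin (p + q + r)) : G 𝔽 p q r :=
  CliffordAlgebra.ι (Q 𝔽 p q r) (Pi.single a 1)

/-- The even subspace `𝒢^{(0)}`: the `+1`-eigenspace of the grade involution. -/
def Geven : Submodule 𝔽 (G 𝔽 p q r) where
  carrier := {x | CliffordAlgebra.involute x = x}
  add_mem' := by
    intro a b ha hb
    simp only [Set.mem_setOf_eq, map_add] at ha hb ⊢
    rw [ha, hb]
  zero_mem' := by simp
  smul_mem' := by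
    intro c x hx
    simp only [Set.mem_setOf_eq, map_smul] at hx ⊢
    rw [hx]

/-- The odd subspace `𝒢^{(1)}`: the `−1`-eigenspace of the grade involution. -/
def Godd : Submodule 𝔽 (G 𝔽 p q r) where
  carrier := {x | CliffordAlgebra.involute x = -x}
  add_mem' := by
    intro a b ha hb
    simp only [Set.mem_setOf_eq, map_add] at ha hb ⊢
    rw [ha, hb, neg_add]
  zero_mem' := by simp
  smul_mem' := by
    intro c x hx
    simp only [Set.mem_setOf_eq, map_smul] at hx ⊢
    rw [hx, smul_neg]

/-- The grade-1 subspace `𝒢^1`, the span of the generators. -/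
def G1 : Submodule 𝔽 (G 𝔽 p q r) := Submodule.span 𝔽 (Set.range (e 𝔽 p q r))

/-- The scalar (grade-0) subspace `𝒢^0 = 𝔽·1`. -/
def G0 : Submodule 𝔽 (G 𝔽 p q r) := Submodule.span 𝔽 {(1 : G 𝔽 p q r)}

/-- The element `e_{1…n} = e_1 e_2 ⋯ e_n`. -/
def eTop : G 𝔽 p q r := (List.ofFn (e 𝔽 p q r)).prod

/-- The grade-`n` subspace `𝒢^n = 𝔽·e_{1…n}`. -/
def Gn : Submodule 𝔽 (G 𝔽 p q r) := Submodule.span 𝔽 {eTop 𝔽 p q r}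

/-- The Grassmann subalgebra `Λ_r` generated by the null generators. -/
def Λr : Subalgebra 𝔽 (G 𝔽 p q r) :=
  Algebra.adjoin 𝔽 {x | ∃ a : Fin (p + q + r), p + q ≤ (a : ℕ) ∧ x = e 𝔽 p q r a}

/-- `Λ_r` viewed as a subspace of `𝒢`. -/
def Λrs : Submodule 𝔽 (G 𝔽 p q r) := Subalgebra.toSubmodule (Λr 𝔽 p q r)

/-- The even part `Λ_r^{(0)} = Λ_r ∩ 𝒢^{(0)}`. -/
def Λr0 : Submodule 𝔽 (G 𝔽 p q r) := Λrs 𝔽 p q r ⊓ Geven 𝔽 p q r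

/-- The Jacobson radical `rad 𝒢` of `𝒢`: the two-sided ideal generated by the
null generators. -/
def radG : Submodule 𝔽 (G 𝔽 p q r) :=
  Submodule.span 𝔽 {x | ∃ (u v : G 𝔽 p q r) (a : Fin (p + q + r)),
    p + q ≤ (a : ℕ) ∧ x = u * e 𝔽 p q r a * v}

/-- `rad 𝒢^{(0)} = rad 𝒢 ∩ 𝒢^{(0)}`. -/
def radG0 : Submodule 𝔽 (G 𝔽 p q r) := radG 𝔽 p q r ⊓ Geven 𝔽 p q r

/-- For a subset `S ⊆ 𝒢`, `S^×` denotes those elements of `S` invertible in `𝒢`. -/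
def ux (S : Set (G 𝔽 p q r)) : Set (G 𝔽 p q r) := {x ∈ S | IsUnit x}

/-- `𝒢^{(0)×} ∪ 𝒢^{(1)×}` (the group `P^±_{p,q,r}`). -/
def Epm : Set (G 𝔽 p q r) :=
  ux 𝔽 p q r ↑(Geven 𝔽 p q r) ∪ ux 𝔽 p q r ↑(Godd 𝔽 p q r)

/-- `(T⁻¹)^̂ · T`, the grade involution of the inverse times `T`. -/
def tw (T : G 𝔽 p q r) : G 𝔽 p q r :=
  CliffordAlgebra.involute (Ring.inverse T) * T

/-- The invertible elements `T` with `T W T⁻¹ ⊆ W` (adjoint representation). -/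
def gammaAd (W : Submodule 𝔽 (G 𝔽 p q r)) : Set (G 𝔽 p q r) :=
  {T | IsUnit T ∧ ∀ U ∈ W, T * U * Ring.inverse T ∈ W}

/-- The invertible elements `T` with `T̂ W T⁻¹ ⊆ W` (twisted adjoint representation). -/
def gammaTw (W : Submodule 𝔽 (G 𝔽 p q r)) : Set (G 𝔽 p q r) :=
  {T | IsUnit T ∧ ∀ U ∈ W, CliffordAlgebra.involute T * U * Ring.inverse T ∈ W}


open CliffordAlgebra in
lemma Q_apply (v : Fin (p+q+r) → 𝔽) :
    Q 𝔽 p q r v = ∑ i, w 𝔽 p q r i * (v i * v i) := by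
  simp [Q, QuadraticMap.weightedSumSquares_apply, smul_eq_mul]

lemma w_null {c : Fin (p+q+r)} (hc : p + q ≤ (c:ℕ)) : w 𝔽 p q r c = 0 := by
  simp only [w]
  rw [if_neg (by omega), if_neg (by omega)]

lemma w_ne_zero {a : Fin (p+q+r)} (ha : (a:ℕ) < p + q) : w 𝔽 p q r a ≠ 0 := by
  simp only [w]
  split_ifs <;> simp

lemma Q_single (a : Fin (p+q+r)) : Q 𝔽 p q r (Pi.single a 1) = w 𝔽 p q r a := by
  rw [Q_apply, Finset.sum_eq_single a]
  · simp
  · intro b _ hb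
    rw [Pi.single_eq_of_ne hb]; ring
  · simp

lemma polar_single (a : Fin (p+q+r)) (v : Fin (p+q+r) → 𝔽) :
    QuadraticMap.polar (Q 𝔽 p q r) (Pi.single a 1) v = 2 * w 𝔽 p q r a * v a := by
  rw [QuadraticMap.polar, Q_apply, Q_apply, Q_apply,
    ← Finset.sum_sub_distrib, ← Finset.sum_sub_distrib,
    Finset.sum_eq_single a]
  · simp only [Pi.add_apply, Pi.single_eq_same]; ring
  · intro b _ hb
    simp only [Pi.add_apply, Pi.single_eq_of_ne hb]; ring
  · simp

open CliffordAlgebra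

lemma e_sq (a : Fin (p+q+r)) :
    e 𝔽 p q r a * e 𝔽 p q r a = algebraMap 𝔽 _ (w 𝔽 p q r a) := by
  rw [e, ι_sq_scalar, Q_single]

lemma e_anticomm {a b : Fin (p+q+r)} (h : a ≠ b) :
    e 𝔽 p q r a * e 𝔽 p q r b = -(e 𝔽 p q r b * e 𝔽 p q r a) := by
  have h2 := ι_mul_ι_add_swap (Q := Q 𝔽 p q r) (Pi.single a 1) (Pi.single b 1)
  rw [polar_single, Pi.single_eq_of_ne h] at h2
  rw [mul_zero] at h2
  simp only [map_zero] at h2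
  exact eq_neg_of_add_eq_zero_left (by rw [← e, ← e] at h2; exact h2)

lemma e_null_mul {c : Fin (p+q+r)} (hc : p + q ≤ (c:ℕ)) (x : G 𝔽 p q r) :
    e 𝔽 p q r c * x = involute x * e 𝔽 p q r c := by
  induction x using CliffordAlgebra.induction with
  | algebraMap t => rw [AlgHom.commutes, Algebra.commutes]
  | ι v =>
      have h2 := ι_mul_ι_add_swap (Q := Q 𝔽 p q r) (Pi.single c 1) v
      rw [polar_single, w_null 𝔽 p q r hc, mul_zero, zero_mul, map_zero] at h2
      simp only [e, involute_ι, neg_mul]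
      linear_combination (norm := noncomm_ring) h2
  | mul x y hx hy =>
      rw [← mul_assoc, hx, mul_assoc, hy, map_mul, mul_assoc]
  | add x y hx hy => rw [mul_add, hx, hy, map_add, add_mul]

lemma mul_e_null {c : Fin (p+q+r)} (hc : p + q ≤ (c:ℕ)) (x : G 𝔽 p q r) :
    x * e 𝔽 p q r c = e 𝔽 p q r c * involute x := by
  conv_lhs => rw [← involute_involute (a := x)]
  rw [← e_null_mul 𝔽 p q r hc]

/-- Product of generators along a list of indices. -/
def P (l : List (Fin (p+q+r))) : G 𝔽 p q r := (l.map (e 𝔽 p q r)).prod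

lemma P_nil : P 𝔽 p q r [] = 1 := rfl

lemma P_cons (a : Fin (p+q+r)) (l : List (Fin (p+q+r))) :
    P 𝔽 p q r (a :: l) = e 𝔽 p q r a * P 𝔽 p q r l := by
  simp [P]

lemma P_append (l₁ l₂ : List (Fin (p+q+r))) :
    P 𝔽 p q r (l₁ ++ l₂) = P 𝔽 p q r l₁ * P 𝔽 p q r l₂ := by
  simp [P]

lemma alg_central (c : 𝔽) (x : G 𝔽 p q r) :
    x * algebraMap 𝔽 (G 𝔽 p q r) c = algebraMap 𝔽 (G 𝔽 p q r) c * x :=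
  (Algebra.commutes c x).symm

lemma e_mul_P_not_mem {a : Fin (p+q+r)} {l : List (Fin (p+q+r))} (h : a ∉ l) :
    e 𝔽 p q r a * P 𝔽 p q r l = ((-1:𝔽))^l.length • (P 𝔽 p q r l * e 𝔽 p q r a) := by
  induction l with
  | nil => simp [P_nil]
  | cons b l ih =>
      have hab : a ≠ b := fun hh => h (hh ▸ List.mem_cons_self (a := b) (l := l))
      have hal : a ∉ l := fun hh => h (List.mem_cons_of_mem _ hh)
      rw [P_cons, ← mul_assoc, e_anticomm 𝔽 p q r hab, neg_mul, mul_assoc,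
        ih hal, mul_smul_comm, List.length_cons, pow_succ, ← neg_smul]
      rw [mul_assoc]
      ring_nf

lemma P_mul_e_not_mem {a : Fin (p+q+r)} {l : List (Fin (p+q+r))} (h : a ∉ l) :
    P 𝔽 p q r l * e 𝔽 p q r a = ((-1:𝔽))^l.length • (e 𝔽 p q r a * P 𝔽 p q r l) := by
  rw [e_mul_P_not_mem 𝔽 p q r h, smul_smul, ← pow_add, ← two_mul]
  rw [pow_mul, neg_one_sq, one_pow, one_smul]

lemma e_mul_P_mem {a : Fin (p+q+r)} {l : List (Fin (p+q+r))} (hl : l.Nodup) (ha : a ∈ l) :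
    (e 𝔽 p q r a * P 𝔽 p q r l = ((-1:𝔽))^(l.length - 1) • (P 𝔽 p q r l * e 𝔽 p q r a)) ∧
    (w 𝔽 p q r a = 0 → e 𝔽 p q r a * P 𝔽 p q r l = 0 ∧ P 𝔽 p q r l * e 𝔽 p q r a = 0) := by
  obtain ⟨s, t, rfl⟩ := List.append_of_mem ha
  have hs : a ∉ s := by
    have := List.Nodup.of_append_left hl
    intro hmem
    exact (List.nodup_cons.mp ((List.nodup_middle).mp hl)).1 (List.mem_append_left _ hmem)
  have ht : a ∉ t := by
    exact fun hmem => (List.nodup_cons.mp ((List.nodup_middle).mp hl)).1 (List.mem_append_right _ hmem)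
  have hPs : P 𝔽 p q r (s ++ a :: t) = P 𝔽 p q r s * (e 𝔽 p q r a * P 𝔽 p q r t) := by
    rw [P_append, P_cons]
  have key1 : e 𝔽 p q r a * P 𝔽 p q r (s ++ a :: t)
      = ((-1:𝔽))^s.length • (algebraMap 𝔽 _ (w 𝔽 p q r a) * (P 𝔽 p q r s * P 𝔽 p q r t)) := by
    rw [hPs, ← mul_assoc, e_mul_P_not_mem 𝔽 p q r hs, smul_mul_assoc, mul_assoc,
      ← mul_assoc (e 𝔽 p q r a), e_sq, Algebra.commutes]
    congr 1
    rw [← mul_assoc, alg_central]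
  have key2 : P 𝔽 p q r (s ++ a :: t) * e 𝔽 p q r a
      = ((-1:𝔽))^t.length • (algebraMap 𝔽 _ (w 𝔽 p q r a) * (P 𝔽 p q r s * P 𝔽 p q r t)) := by
    rw [hPs, mul_assoc, mul_assoc, P_mul_e_not_mem 𝔽 p q r ht, mul_smul_comm, mul_smul_comm,
      ← mul_assoc (e 𝔽 p q r a), e_sq]
    congr 1
    rw [← mul_assoc, alg_central, mul_assoc]
  constructor
  · rw [key1, key2, smul_smul, ← pow_add]
    have hlen : (s ++ a :: t).length - 1 + t.length = s.length + 2 * t.length := by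
      simp [List.length_append]; omega
    rw [hlen, pow_add, pow_mul, neg_one_sq, one_pow, mul_one]
  · intro hw
    rw [key1, key2, hw]
    simp

lemma eTop_eq_P : eTop 𝔽 p q r = P 𝔽 p q r (List.finRange (p+q+r)) := by
  rw [eTop, P, List.ofFn_eq_map]

lemma e_mul_eTop (a : Fin (p+q+r)) :
    e 𝔽 p q r a * eTop 𝔽 p q r = ((-1:𝔽))^(p+q+r-1) • (eTop 𝔽 p q r * e 𝔽 p q r a) := by
  rw [eTop_eq_P]
  have := (e_mul_P_mem 𝔽 p q r (List.nodup_finRange _) (List.mem_finRange a)).1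
  rwa [List.length_finRange] at this

lemma eTop_mul_e_null {c : Fin (p+q+r)} (hc : p + q ≤ (c:ℕ)) :
    eTop 𝔽 p q r * e 𝔽 p q r c = 0 ∧ e 𝔽 p q r c * eTop 𝔽 p q r = 0 := by
  rw [eTop_eq_P]
  have := (e_mul_P_mem 𝔽 p q r (List.nodup_finRange _) (List.mem_finRange c)).2
    (w_null 𝔽 p q r hc)
  exact ⟨this.2, this.1⟩

lemma ι_eq_sum (v : Fin (p+q+r) → 𝔽) :
    CliffordAlgebra.ι (Q 𝔽 p q r) v = ∑ a, v a • e 𝔽 p q r a := by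
  have hv : v = ∑ a, v a • (Pi.single a 1 : Fin (p+q+r) → 𝔽) := by
    ext j
    rw [Finset.sum_apply]
    rw [Finset.sum_eq_single j]
    · simp
    · intro b _ hb
      simp [Pi.single_eq_of_ne (Ne.symm hb)]
    · simp
  conv_lhs => rw [hv]
  rw [map_sum]
  simp [e]

lemma mul_eTop_odd (hodd : Odd (p+q+r)) (x : G 𝔽 p q r) :
    x * eTop 𝔽 p q r = eTop 𝔽 p q r * x := by
  have hsign : ((-1:𝔽))^(p+q+r-1) = 1 := by
    apply Even.neg_one_pow
    rcases hodd with ⟨k, hk⟩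
    exact ⟨k, by omega⟩
  induction x using CliffordAlgebra.induction with
  | algebraMap t => rw [← Algebra.commutes]
  | ι v =>
      rw [ι_eq_sum, Finset.sum_mul, Finset.mul_sum]
      refine Finset.sum_congr rfl fun a _ => ?_
      rw [smul_mul_assoc, e_mul_eTop 𝔽 p q r a, hsign, one_smul, mul_smul_comm]
  | mul x y hx hy => rw [mul_assoc, hy, ← mul_assoc, hx, mul_assoc]
  | add x y hx hy => rw [add_mul, hx, hy, mul_add]

lemma mul_eTop_even (heven : Even (p+q+r)) (hn : 1 ≤ p + q + r) (x : G 𝔽 p q r) :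
    x * eTop 𝔽 p q r = eTop 𝔽 p q r * CliffordAlgebra.involute x := by
  have hsign : ((-1:𝔽))^(p+q+r-1) = -1 := by
    apply Odd.neg_one_pow
    rcases heven with ⟨k, hk⟩
    refine ⟨k-1, by omega⟩
  induction x using CliffordAlgebra.induction with
  | algebraMap t => rw [AlgHom.commutes, ← Algebra.commutes]
  | ι v =>
      rw [CliffordAlgebra.involute_ι, mul_neg, ι_eq_sum, Finset.sum_mul, Finset.mul_sum,
        ← Finset.sum_neg_distrib]
      refine Finset.sum_congr rfl fun a _ => ?_
      rw [smul_mul_assoc, e_mul_eTop 𝔽 p q r a, hsign, neg_one_smul, smul_neg, mul_smul_comm]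
  | mul x y hx hy => rw [mul_assoc, hy, ← mul_assoc, hx, mul_assoc, map_mul]
  | add x y hx hy => rw [add_mul, hx, hy, map_add, mul_add]

/-- `x` if `n` is odd, `involute x` if `n` is even. -/
def invo (x : G 𝔽 p q r) : G 𝔽 p q r :=
  if Even (p+q+r) then CliffordAlgebra.involute x else x

lemma invo_invo (x : G 𝔽 p q r) : invo 𝔽 p q r (invo 𝔽 p q r x) = x := by
  unfold invo
  split_ifs <;> simp

lemma mul_eTop_invo (hn : 1 ≤ p+q+r) (x : G 𝔽 p q r) :
    x * eTop 𝔽 p q r = eTop 𝔽 p q r * invo 𝔽 p q r x := by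
  unfold invo
  split_ifs with h
  · exact mul_eTop_even 𝔽 p q r h hn x
  · exact mul_eTop_odd 𝔽 p q r (Nat.odd_iff.mpr (Nat.not_even_iff.mp h)) x

lemma eTop_mul_swap (hn : 1 ≤ p+q+r) (x : G 𝔽 p q r) :
    eTop 𝔽 p q r * x = invo 𝔽 p q r x * eTop 𝔽 p q r := by
  conv_lhs => rw [← invo_invo 𝔽 p q r x, ← mul_eTop_invo 𝔽 p q r hn (invo 𝔽 p q r x)]

-- radical basics
lemma radG_mul_right {x : G 𝔽 p q r} (hx : x ∈ radG 𝔽 p q r) (y : G 𝔽 p q r) :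
    x * y ∈ radG 𝔽 p q r := by
  induction hx using Submodule.span_induction with
  | mem z hz =>
      obtain ⟨u, v, c, hc, rfl⟩ := hz
      refine Submodule.subset_span ⟨u, v * y, c, hc, by noncomm_ring⟩
  | zero => rw [zero_mul]; exact Submodule.zero_mem _
  | add a b _ _ ha hb => rw [add_mul]; exact Submodule.add_mem _ ha hb
  | smul c a _ ha => rw [smul_mul_assoc]; exact Submodule.smul_mem _ _ ha

lemma radG_mul_left {x : G 𝔽 p q r} (hx : x ∈ radG 𝔽 p q r) (y : G 𝔽 p q r) :
    y * x ∈ radG 𝔽 p q r := by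
  induction hx using Submodule.span_induction with
  | mem z hz =>
      obtain ⟨u, v, c, hc, rfl⟩ := hz
      refine Submodule.subset_span ⟨y * u, v, c, hc, by noncomm_ring⟩
  | zero => rw [mul_zero]; exact Submodule.zero_mem _
  | add a b _ _ ha hb => rw [mul_add]; exact Submodule.add_mem _ ha hb
  | smul c a _ ha => rw [mul_smul_comm]; exact Submodule.smul_mem _ _ ha

lemma e_null_mem_radG {c : Fin (p+q+r)} (hc : p + q ≤ (c:ℕ)) :
    e 𝔽 p q r c ∈ radG 𝔽 p q r :=
  Submodule.subset_span ⟨1, 1, c, hc, by noncomm_ring⟩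

lemma involute_radG {x : G 𝔽 p q r} (hx : x ∈ radG 𝔽 p q r) :
    CliffordAlgebra.involute x ∈ radG 𝔽 p q r := by
  induction hx using Submodule.span_induction with
  | mem z hz =>
      obtain ⟨u, v, c, hc, rfl⟩ := hz
      have h2 : CliffordAlgebra.involute (u * e 𝔽 p q r c * v)
          = -(CliffordAlgebra.involute u * e 𝔽 p q r c * CliffordAlgebra.involute v) := by
        rw [map_mul, map_mul, e, CliffordAlgebra.involute_ι]
        noncomm_ring
      rw [h2]
      exact Submodule.neg_mem _ (Submodule.subset_span ⟨_, _, c, hc, rfl⟩)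
  | zero => rw [map_zero]; exact Submodule.zero_mem _
  | add a b _ _ ha hb => rw [map_add]; exact Submodule.add_mem _ ha hb
  | smul c a _ ha => rw [map_smul]; exact Submodule.smul_mem _ _ ha

lemma eTop_mul_radG (hn : 1 ≤ p+q+r) {x : G 𝔽 p q r} (hx : x ∈ radG 𝔽 p q r) :
    eTop 𝔽 p q r * x = 0 ∧ x * eTop 𝔽 p q r = 0 := by
  induction hx using Submodule.span_induction with
  | mem z hz =>
      obtain ⟨u, v, c, hc, rfl⟩ := hz
      constructor
      · calc eTop 𝔽 p q r * (u * e 𝔽 p q r c * v)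
            = (eTop 𝔽 p q r * u) * e 𝔽 p q r c * v := by noncomm_ring
          _ = (invo 𝔽 p q r u * eTop 𝔽 p q r) * e 𝔽 p q r c * v := by
              rw [eTop_mul_swap 𝔽 p q r hn u]
          _ = invo 𝔽 p q r u * (eTop 𝔽 p q r * e 𝔽 p q r c) * v := by noncomm_ring
          _ = 0 := by rw [(eTop_mul_e_null 𝔽 p q r hc).1, mul_zero, zero_mul]
      · calc (u * e 𝔽 p q r c * v) * eTop 𝔽 p q r
            = u * e 𝔽 p q r c * (v * eTop 𝔽 p q r) := by noncomm_ring
          _ = u * e 𝔽 p q r c * (eTop 𝔽 p q r * invo 𝔽 p q r v) := by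
              rw [mul_eTop_invo 𝔽 p q r hn v]
          _ = u * (e 𝔽 p q r c * eTop 𝔽 p q r) * invo 𝔽 p q r v := by noncomm_ring
          _ = 0 := by rw [(eTop_mul_e_null 𝔽 p q r hc).2, mul_zero, zero_mul]
  | zero => simp
  | add a b _ _ ha hb =>
      constructor
      · rw [mul_add, ha.1, hb.1, add_zero]
      · rw [add_mul, ha.2, hb.2, add_zero]
  | smul c a _ ha =>
      constructor
      · rw [mul_smul_comm, ha.1, smul_zero]
      · rw [smul_mul_assoc, ha.2, smul_zero]

-- nilpotency of radical elements
lemma e_null_mul_P_mem {c : Fin (p+q+r)} (hc : p + q ≤ (c:ℕ)) {l : List (Fin (p+q+r))}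
    (hl : ∀ c' ∈ l, p + q ≤ (c':ℕ)) (hmem : c ∈ l) :
    e 𝔽 p q r c * P 𝔽 p q r l = 0 := by
  induction l with
  | nil => cases hmem
  | cons d l ih =>
      rw [P_cons, ← mul_assoc]
      rcases eq_or_ne c d with rfl | hcd
      · rw [e_sq, w_null 𝔽 p q r hc, map_zero, zero_mul]
      · rw [e_anticomm 𝔽 p q r hcd, neg_mul, mul_assoc,
          ih (fun c' h => hl c' (List.mem_cons_of_mem _ h))
            ((List.mem_cons.mp hmem).resolve_left hcd),
          mul_zero, neg_zero]

lemma P_null_dup_zero {l : List (Fin (p+q+r))} (hl : ∀ c ∈ l, p + q ≤ (c:ℕ))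
    (hdup : ¬ l.Nodup) : P 𝔽 p q r l = 0 := by
  induction l with
  | nil => exact absurd List.nodup_nil hdup
  | cons c l ih =>
      rw [List.nodup_cons] at hdup
      push_neg at hdup
      rw [P_cons]
      by_cases hmem : c ∈ l
      · exact e_null_mul_P_mem 𝔽 p q r (hl c (List.mem_cons_self (a := c) (l := l)))
          (fun c' h => hl c' (List.mem_cons_of_mem _ h)) hmem
      · rw [ih (fun c' h => hl c' (List.mem_cons_of_mem _ h)) (hdup hmem), mul_zero]

/-- Submodule spanned by products of `k` null generators times arbitrary elements. -/
def Nk (k : ℕ) : Submodule 𝔽 (G 𝔽 p q r) :=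
  Submodule.span 𝔽 {x | ∃ (l : List (Fin (p+q+r))) (y : G 𝔽 p q r),
    l.length = k ∧ (∀ c ∈ l, p + q ≤ (c:ℕ)) ∧ x = P 𝔽 p q r l * y}

lemma radG_le_N1 : radG 𝔽 p q r ≤ Nk 𝔽 p q r 1 := by
  rw [radG, Submodule.span_le]
  rintro x ⟨u, v, c, hc, rfl⟩
  refine Submodule.subset_span ⟨[c], CliffordAlgebra.involute u * v, rfl,
    by simpa using hc, ?_⟩
  rw [P_cons, P_nil, mul_one, mul_assoc, ← mul_assoc u, mul_e_null 𝔽 p q r hc u, mul_assoc]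

lemma Nk_mul_radG {k : ℕ} {x y : G 𝔽 p q r} (hx : x ∈ Nk 𝔽 p q r k)
    (hy : y ∈ radG 𝔽 p q r) : x * y ∈ Nk 𝔽 p q r (k+1) := by
  induction hx using Submodule.span_induction with
  | mem z hz =>
      obtain ⟨l, z', hlen, hnull, rfl⟩ := hz
      induction hy using Submodule.span_induction with
      | mem t ht =>
          obtain ⟨u, v, c, hc, rfl⟩ := ht
          refine Submodule.subset_span ⟨l ++ [c], CliffordAlgebra.involute (z' * u) * v, by simp [hlen], ?_, ?_⟩
          · intro c' hc'
            rcases List.mem_append.mp hc' with h | h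
            · exact hnull c' h
            · simpa using (by simpa using h : c' = c) ▸ hc
          · rw [P_append, P_cons, P_nil, mul_one]
            have : z' * (u * e 𝔽 p q r c * v) = (z' * u) * e 𝔽 p q r c * v := by noncomm_ring
            rw [mul_assoc, this, mul_e_null 𝔽 p q r hc (z' * u), map_mul]
            noncomm_ring
      | zero => rw [mul_zero]; exact Submodule.zero_mem _
      | add a b _ _ ha hb => rw [mul_add]; exact Submodule.add_mem _ ha hb
      | smul c a _ ha => rw [mul_smul_comm]; exact Submodule.smul_mem _ _ ha
  | zero => rw [zero_mul]; exact Submodule.zero_mem _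
  | add a b _ _ ha hb => rw [add_mul]; exact Submodule.add_mem _ ha hb
  | smul c a _ ha => rw [smul_mul_assoc]; exact Submodule.smul_mem _ _ ha

lemma card_null_finset :
    (Finset.univ.filter (fun a : Fin (p+q+r) => p + q ≤ (a:ℕ))).card = r := by
  have : Finset.univ.filter (fun a : Fin (p+q+r) => p + q ≤ (a:ℕ))
      = Finset.map ⟨Fin.natAdd (p+q), fun i j h => by
          simpa [Fin.ext_iff] using h⟩ Finset.univ := by
    ext a
    simp only [Finset.mem_filter, Finset.mem_univ, true_and, Finset.mem_map,
      Function.Embedding.coeFn_mk]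
    constructor
    · intro ha
      refine ⟨⟨(a:ℕ) - (p+q), by omega⟩, ?_⟩
      ext
      show (p+q) + ((a:ℕ) - (p+q)) = a
      omega
    · rintro ⟨i, rfl⟩
      show p + q ≤ p + q + (i:ℕ)
      omega
  rw [this, Finset.card_map, Finset.card_univ, Fintype.card_fin]

lemma Nk_top_eq_bot : Nk 𝔽 p q r (r+1) = ⊥ := by
  rw [Nk, Submodule.span_eq_bot]
  rintro x ⟨l, y, hlen, hnull, rfl⟩
  have hdup : ¬ l.Nodup := by
    intro hnd
    have h1 : l.toFinset.card = l.length := List.toFinset_card_of_nodup hnd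
    have h2 : l.toFinset ⊆ Finset.univ.filter (fun a : Fin (p+q+r) => p + q ≤ (a:ℕ)) := by
      intro a ha
      simp only [Finset.mem_filter, Finset.mem_univ, true_and]
      exact hnull a (List.mem_toFinset.mp ha)
    have := Finset.card_le_card h2
    rw [h1, hlen, card_null_finset] at this
    omega
  rw [P_null_dup_zero 𝔽 p q r hnull hdup, zero_mul]

lemma radG_nilpotent {x : G 𝔽 p q r} (hx : x ∈ radG 𝔽 p q r) : x ^ (r+1) = 0 := by
  have key : ∀ k : ℕ, x ^ (k+1) ∈ Nk 𝔽 p q r (k+1) := by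
    intro k
    induction k with
    | zero => rw [pow_one]; exact radG_le_N1 𝔽 p q r hx
    | succ k ih => rw [pow_succ]; exact Nk_mul_radG 𝔽 p q r ih hx
  have := key r
  rw [Nk_top_eq_bot] at this
  simpa using this

instance : Invertible (2 : 𝔽) := invertibleOfNonzero two_ne_zero

lemma radG_not_unit {x : G 𝔽 p q r} (hx : x ∈ radG 𝔽 p q r) : ¬ IsUnit x := by
  intro hu
  have h0 : IsUnit ((0 : G 𝔽 p q r)) := by
    rw [← radG_nilpotent 𝔽 p q r hx]
    exact hu.pow _
  rw [isUnit_zero_iff] at h0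
  exact one_ne_zero h0.symm

/-- The subalgebra generated by the non-null generators. -/
def B : Subalgebra 𝔽 (G 𝔽 p q r) :=
  Algebra.adjoin 𝔽 {x | ∃ a : Fin (p + q + r), (a : ℕ) < p + q ∧ x = e 𝔽 p q r a}

lemma decomp (x : G 𝔽 p q r) :
    ∃ b ∈ B 𝔽 p q r, ∃ ρ ∈ radG 𝔽 p q r, x = b + ρ := by
  induction x using CliffordAlgebra.induction with
  | algebraMap t =>
      exact ⟨algebraMap 𝔽 _ t, Subalgebra.algebraMap_mem _ t, 0, Submodule.zero_mem _,
        (add_zero _).symm⟩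
  | ι v =>
      refine ⟨∑ a ∈ Finset.univ.filter (fun a : Fin (p+q+r) => (a:ℕ) < p + q), v a • e 𝔽 p q r a,
        ?_, ∑ a ∈ Finset.univ.filter (fun a : Fin (p+q+r) => ¬ (a:ℕ) < p + q), v a • e 𝔽 p q r a,
        ?_, ?_⟩
      · refine Subalgebra.sum_mem _ fun a ha => Subalgebra.smul_mem _ ?_ _
        exact Algebra.subset_adjoin ⟨a, (Finset.mem_filter.mp ha).2, rfl⟩
      · refine Submodule.sum_mem _ fun a ha => Submodule.smul_mem _ _ ?_
        exact e_null_mem_radG 𝔽 p q r (by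
          have := (Finset.mem_filter.mp ha).2; omega)
      · rw [ι_eq_sum, Finset.sum_filter_add_sum_filter_not]
  | mul x y hx hy =>
      obtain ⟨b, hb, ρ, hρ, rfl⟩ := hx
      obtain ⟨b', hb', ρ', hρ', rfl⟩ := hy
      refine ⟨b * b', Subalgebra.mul_mem _ hb hb',
        b * ρ' + ρ * b' + ρ * ρ', ?_, by noncomm_ring⟩
      exact Submodule.add_mem _ (Submodule.add_mem _ (radG_mul_left 𝔽 p q r hρ' b)
        (radG_mul_right 𝔽 p q r hρ b')) (radG_mul_right 𝔽 p q r hρ ρ')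
  | add x y hx hy =>
      obtain ⟨b, hb, ρ, hρ, rfl⟩ := hx
      obtain ⟨b', hb', ρ', hρ', rfl⟩ := hy
      exact ⟨b + b', Subalgebra.add_mem _ hb hb', ρ + ρ',
        Submodule.add_mem _ hρ hρ', by abel⟩

open CliffordAlgebra in
lemma contract_mul (d : Module.Dual 𝔽 (Fin (p+q+r) → 𝔽)) (x y : G 𝔽 p q r) :
    contractLeft (Q := Q 𝔽 p q r) d (x * y)
      = contractLeft (Q := Q 𝔽 p q r) d x * y
        + involute x * contractLeft (Q := Q 𝔽 p q r) d y := by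
  induction x using CliffordAlgebra.induction generalizing y with
  | algebraMap t =>
      rw [contractLeft_algebraMap_mul, contractLeft_algebraMap, zero_mul, zero_add,
        AlgHom.commutes]
  | ι v =>
      rw [contractLeft_ι_mul, contractLeft_ι, involute_ι, Algebra.smul_def, neg_mul, sub_eq_add_neg]
  | mul x₁ x₂ h1 h2 =>
      rw [mul_assoc, h1 (x₂ * y), h2 y, h1 x₂, map_mul]
      noncomm_ring
  | add x₁ x₂ h1 h2 =>
      rw [add_mul, map_add, h1 y, h2 y]
      simp only [map_add]
      noncomm_ring

/-- The coordinate functional. -/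
def δ (c : Fin (p+q+r)) : Module.Dual 𝔽 (Fin (p+q+r) → 𝔽) := LinearMap.proj c

open CliffordAlgebra in
lemma contract_B {c : Fin (p+q+r)} (hc : p + q ≤ (c:ℕ)) {b : G 𝔽 p q r}
    (hb : b ∈ B 𝔽 p q r) :
    contractLeft (Q := Q 𝔽 p q r) (δ 𝔽 p q r c) b = 0 := by
  induction hb using Algebra.adjoin_induction with
  | mem z hz =>
      obtain ⟨a, ha, rfl⟩ := hz
      rw [e, contractLeft_ι]
      have : δ 𝔽 p q r c (Pi.single a 1) = 0 := by
        have hne : c ≠ a := fun h => by omega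
        simp [δ, Pi.single_eq_of_ne hne]
      rw [this, map_zero]
  | algebraMap t => rw [contractLeft_algebraMap]
  | add x y _ _ hx hy => rw [map_add, hx, hy, add_zero]
  | mul x y _ _ hx hy => rw [contract_mul, hx, hy, zero_mul, mul_zero, add_zero]

open CliffordAlgebra in
lemma contract_P_not_mem {c : Fin (p+q+r)} {l : List (Fin (p+q+r))} (h : c ∉ l) :
    contractLeft (Q := Q 𝔽 p q r) (δ 𝔽 p q r c) (P 𝔽 p q r l) = 0 := by
  induction l with
  | nil => rw [P_nil]; exact contractLeft_one _ _
  | cons d l ih =>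
      have hcd : c ≠ d := fun hh => h (hh ▸ List.mem_cons_self (a := d) (l := l))
      rw [P_cons, e, contractLeft_ι_mul, ih (fun hh => h (List.mem_cons_of_mem _ hh)),
        mul_zero, sub_zero]
      have : δ 𝔽 p q r c (Pi.single d 1) = 0 := by
        simp [δ, Pi.single_eq_of_ne hcd]
      rw [this, zero_smul]

open CliffordAlgebra in
lemma theta_cancel {l : List (Fin (p+q+r))} (hl : l.Nodup)
    (hnull : ∀ c ∈ l, p + q ≤ (c:ℕ)) {b : G 𝔽 p q r} (hb : b ∈ B 𝔽 p q r)
    (h : P 𝔽 p q r l * b = 0) : b = 0 := by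
  induction l with
  | nil => rwa [P_nil, one_mul] at h
  | cons c l ih =>
      have hc : p + q ≤ (c:ℕ) := hnull c (List.mem_cons_self (a := c) (l := l))
      have hcl : c ∉ l := (List.nodup_cons.mp hl).1
      have happ : contractLeft (Q := Q 𝔽 p q r) (δ 𝔽 p q r c) (P 𝔽 p q r (c :: l) * b)
          = P 𝔽 p q r l * b := by
        rw [P_cons, mul_assoc, e, contractLeft_ι_mul]
        have h1 : contractLeft (Q := Q 𝔽 p q r) (δ 𝔽 p q r c) (P 𝔽 p q r l * b) = 0 := by
          rw [contract_mul, contract_P_not_mem 𝔽 p q r hcl, zero_mul,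
            contract_B 𝔽 p q r hc hb, mul_zero, add_zero]
        rw [h1, mul_zero, sub_zero]
        have : δ 𝔽 p q r c (Pi.single c 1) = 1 := by simp [δ]
        rw [this, one_smul]
      rw [h, map_zero] at happ
      exact ih (List.nodup_cons.mp hl).2 (fun c' h' => hnull c' (List.mem_cons_of_mem _ h'))
        happ.symm

/-- The list of non-null indices. -/
def lnn : List (Fin (p+q+r)) := List.ofFn (fun i : Fin (p+q) => Fin.castAdd r i)

/-- The list of null indices. -/
def lnl : List (Fin (p+q+r)) := List.ofFn (fun j : Fin r => Fin.natAdd (p+q) j)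

lemma lnn_mem {a : Fin (p+q+r)} (ha : a ∈ lnn p q r) : (a:ℕ) < p + q := by
  rw [lnn, List.mem_ofFn] at ha
  obtain ⟨i, rfl⟩ := ha
  simpa using i.isLt

lemma lnl_mem {c : Fin (p+q+r)} (hc : c ∈ lnl p q r) : p + q ≤ (c:ℕ) := by
  rw [lnl, List.mem_ofFn] at hc
  obtain ⟨i, rfl⟩ := hc
  simp [Fin.natAdd]

lemma lnn_nodup : (lnn p q r).Nodup := by
  rw [lnn, List.nodup_ofFn]
  intro i j h
  simpa [Fin.ext_iff] using h

lemma lnl_nodup : (lnl p q r).Nodup := by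
  rw [lnl, List.nodup_ofFn]
  intro i j h
  simpa [Fin.ext_iff] using h

lemma eTop_split : eTop 𝔽 p q r = P 𝔽 p q r (lnn p q r) * P 𝔽 p q r (lnl p q r) := by
  have h := List.ofFn_add (f := fun i : Fin ((p+q)+r) => e 𝔽 p q r i)
  rw [eTop, h, List.prod_append, P, P, lnn, lnl, List.map_ofFn, List.map_ofFn]
  rfl

lemma P_self_sq {l : List (Fin (p+q+r))} (hl : l.Nodup)
    (hw : ∀ a ∈ l, w 𝔽 p q r a ≠ 0) :
    ∃ c : 𝔽, c ≠ 0 ∧ P 𝔽 p q r l * P 𝔽 p q r l = c • 1 := by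
  induction l with
  | nil => exact ⟨1, one_ne_zero, by rw [P_nil, one_mul, one_smul]⟩
  | cons a l ih =>
      obtain ⟨c, hc, hcc⟩ := ih (List.nodup_cons.mp hl).2
        (fun a' h' => hw a' (List.mem_cons_of_mem _ h'))
      have hal : a ∉ l := (List.nodup_cons.mp hl).1
      refine ⟨((-1:𝔽))^l.length * w 𝔽 p q r a * c, by
        simp only [mul_ne_zero_iff]
        exact ⟨⟨pow_ne_zero _ (by norm_num), hw a (List.mem_cons_self (a := a) (l := l))⟩, hc⟩, ?_⟩
      rw [P_cons]
      calc e 𝔽 p q r a * P 𝔽 p q r l * (e 𝔽 p q r a * P 𝔽 p q r l)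
          = e 𝔽 p q r a * (P 𝔽 p q r l * e 𝔽 p q r a) * P 𝔽 p q r l := by noncomm_ring
        _ = ((-1:𝔽))^l.length • (e 𝔽 p q r a * (e 𝔽 p q r a * P 𝔽 p q r l) * P 𝔽 p q r l) := by
            rw [P_mul_e_not_mem 𝔽 p q r hal, mul_smul_comm, smul_mul_assoc]
        _ = ((-1:𝔽))^l.length • (algebraMap 𝔽 _ (w 𝔽 p q r a) * (P 𝔽 p q r l * P 𝔽 p q r l)) := by
            rw [← mul_assoc, ← mul_assoc, e_sq]
        _ = (((-1:𝔽))^l.length * w 𝔽 p q r a * c) • 1 := by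
            rw [hcc, Algebra.smul_def, Algebra.smul_def, Algebra.smul_def]
            simp [map_mul, mul_assoc]
  
lemma isUnit_P_lnn : IsUnit (P 𝔽 p q r (lnn p q r)) := by
  obtain ⟨c, hc, hcc⟩ := P_self_sq 𝔽 p q r (lnn_nodup p q r)
    (fun a ha => w_ne_zero 𝔽 p q r (lnn_mem p q r ha))
  refine ⟨⟨P 𝔽 p q r (lnn p q r), c⁻¹ • P 𝔽 p q r (lnn p q r), ?_, ?_⟩, rfl⟩
  · rw [mul_smul_comm, hcc, smul_smul, inv_mul_cancel₀ hc, one_smul]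
  · rw [smul_mul_assoc, hcc, smul_smul, inv_mul_cancel₀ hc, one_smul]

/-- The right annihilator of `eTop` is exactly the radical. -/
lemma eTop_ann {x : G 𝔽 p q r} (h : eTop 𝔽 p q r * x = 0) : x ∈ radG 𝔽 p q r := by
  obtain ⟨b, hb, ρ, hρ, rfl⟩ := decomp 𝔽 p q r x
  have hnn : 1 ≤ p + q + r ∨ p + q + r = 0 := by omega
  rcases Nat.eq_zero_or_pos (p+q+r) with h0 | hpos
  · -- degenerate case n = 0 cannot happen in our use, but handle:
    -- eTop = empty product = 1, so x = 0 ∈ radG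
    have : eTop 𝔽 p q r = 1 := by
      rw [eTop_eq_P]
      have : List.finRange (p+q+r) = [] := by
        rw [h0]; rfl
      rw [this, P_nil]
    rw [this, one_mul] at h
    rw [h]
    exact Submodule.zero_mem _
  · have h1 : eTop 𝔽 p q r * ρ = 0 := (eTop_mul_radG 𝔽 p q r hpos hρ).1
    have h2 : eTop 𝔽 p q r * b = 0 := by
      have := h
      rw [mul_add, h1, add_zero] at this
      exact this
    rw [eTop_split] at h2
    have h3 : P 𝔽 p q r (lnl p q r) * b = 0 := by
      obtain ⟨u, hu⟩ := isUnit_P_lnn 𝔽 p q r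
      have := congrArg (fun z => (↑u⁻¹ : G 𝔽 p q r) * z) h2
      simpa [← hu, mul_assoc, ← mul_assoc, Units.inv_mul] using this
    have hb0 : b = 0 := theta_cancel 𝔽 p q r (lnl_nodup p q r)
      (fun c hc => lnl_mem p q r hc) hb h3
    rw [hb0, zero_add]
    exact hρ

open CliffordAlgebra in
lemma cond_to_mem {T : G 𝔽 p q r} (hT : IsUnit T) {μ : 𝔽} {ρ : G 𝔽 p q r}
    (hρ : ρ ∈ radG 𝔽 p q r) (hC : involute T = μ • T + ρ) :
    T ∈ Epm 𝔽 p q r * ux 𝔽 p q r ↑(G0 𝔽 p q r ⊔ radG 𝔽 p q r) := by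
  -- first: μ = ±1
  have hTeq : T = (μ*μ) • T + (μ • ρ + involute ρ) := by
    have h := congrArg (involute (Q := Q 𝔽 p q r)) hC
    rw [involute_involute, map_add, map_smul, hC] at h
    calc T = μ • (μ • T + ρ) + involute ρ := h
      _ = (μ*μ) • T + (μ • ρ + involute ρ) := by rw [smul_add, smul_smul]; abel
  have hμ : μ = 1 ∨ μ = -1 := by
    by_contra hcon
    push_neg at hcon
    have hμ2 : 1 - μ*μ ≠ 0 := by
      intro h0
      rcases mul_self_eq_one_iff.mp (by linear_combination -h0) with h | h
      · exact hcon.1 h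
      · exact hcon.2 h
    have hX : μ • ρ + involute ρ ∈ radG 𝔽 p q r :=
      Submodule.add_mem _ (Submodule.smul_mem _ _ hρ) (involute_radG 𝔽 p q r hρ)
    have hT' : (1 - μ*μ) • T = μ • ρ + involute ρ := by
      rw [sub_smul, one_smul]
      nth_rewrite 1 [hTeq]
      abel
    have hTrad : T ∈ radG 𝔽 p q r := by
      have : T = (1 - μ*μ)⁻¹ • ((1 - μ*μ) • T) := by
        rw [smul_smul, inv_mul_cancel₀ hμ2, one_smul]
      rw [this, hT']
      exact Submodule.smul_mem _ _ hX
    exact radG_not_unit 𝔽 p q r hTrad hT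
  have hsq : μ * μ = 1 := by rcases hμ with h | h <;> rw [h] <;> ring
  -- involute ρ = -(μ • ρ)
  rw [hsq, one_smul] at hTeq
  have h3 : μ • ρ + involute ρ = 0 := (left_eq_add.mp hTeq)
  have hiρ : involute ρ = -(μ • ρ) := (neg_eq_of_add_eq_zero_right h3).symm
  -- define E
  set E : G 𝔽 p q r := T + (2⁻¹ * μ) • ρ with hE_def
  have hiE : involute E = μ • E := by
    have h1 : (2⁻¹*μ : 𝔽) • involute ρ = -((2⁻¹:𝔽) • ρ) := by
      rw [hiρ, smul_neg, smul_smul, mul_assoc, hsq, mul_one]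
    have h2 : μ * (2⁻¹ * μ) = (2⁻¹:𝔽) := by
      have h' : μ * (2⁻¹*μ) = 2⁻¹*(μ*μ) := by ring
      rw [h', hsq, mul_one]
    rw [hE_def, map_add, map_smul, hC, h1, smul_add, smul_smul, h2]
    module
  have hν : (2⁻¹ * μ) • (Ring.inverse T * ρ) ∈ radG 𝔽 p q r :=
    Submodule.smul_mem _ _ (radG_mul_left 𝔽 p q r hρ _)
  have hE_unit : IsUnit E := by
    have hfact : E = T * (1 + (2⁻¹ * μ) • (Ring.inverse T * ρ)) := by
      rw [mul_add, mul_one, mul_smul_comm, ← mul_assoc, Ring.mul_inverse_cancel _ hT, one_mul,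
        hE_def]
    rw [hfact]
    exact hT.mul (IsNilpotent.isUnit_one_add ⟨r+1, radG_nilpotent 𝔽 p q r hν⟩)
  set V : G 𝔽 p q r := Ring.inverse E * T with hV_def
  have hTV : E * V = T := by
    rw [hV_def, ← mul_assoc, Ring.mul_inverse_cancel _ hE_unit, one_mul]
  have hV_unit : IsUnit V := by
    obtain ⟨uE, huE⟩ := hE_unit
    have : Ring.inverse E = ((uE⁻¹ : (G 𝔽 p q r)ˣ) : G 𝔽 p q r) := by
      rw [← huE, Ring.inverse_unit]
    rw [hV_def, this]
    exact (Units.isUnit _).mul hT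
  have hV_mem : V ∈ (↑(G0 𝔽 p q r ⊔ radG 𝔽 p q r) : Set (G 𝔽 p q r)) := by
    have hV_eq : V = 1 + (-(2⁻¹ * μ)) • (Ring.inverse E * ρ) := by
      have hTE : T = E - (2⁻¹ * μ) • ρ := by rw [hE_def]; abel
      rw [hV_def, hTE, mul_sub, Ring.inverse_mul_cancel _ hE_unit, mul_smul_comm, neg_smul]
      abel
    rw [SetLike.mem_coe, hV_eq]
    refine Submodule.add_mem _ ?_ ?_
    · exact Submodule.mem_sup_left (Submodule.mem_span_singleton_self 1)
    · exact Submodule.mem_sup_right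
        (Submodule.smul_mem _ _ (radG_mul_left 𝔽 p q r hρ _))
  have hE_mem : E ∈ Epm 𝔽 p q r := by
    rcases hμ with h | h
    · left
      exact ⟨by rw [SetLike.mem_coe]; show involute E = E; rw [hiE, h, one_smul], hE_unit⟩
    · right
      exact ⟨by rw [SetLike.mem_coe]; show involute E = -E; rw [hiE, h, neg_smul, one_smul],
        hE_unit⟩
  rw [← hTV]
  exact Set.mul_mem_mul hE_mem ⟨hV_mem, hV_unit⟩

open CliffordAlgebra in
lemma mem_to_cond {T : G 𝔽 p q r}
    (h : T ∈ Epm 𝔽 p q r * ux 𝔽 p q r ↑(G0 𝔽 p q r ⊔ radG 𝔽 p q r)) :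
    IsUnit T ∧ ∃ (μ : 𝔽) (ρ : G 𝔽 p q r), ρ ∈ radG 𝔽 p q r ∧ involute T = μ • T + ρ := by
  obtain ⟨E, hE, V, hV, rfl⟩ := Set.mem_mul.mp h
  obtain ⟨hV_mem, hV_unit⟩ := hV
  rw [SetLike.mem_coe] at hV_mem
  obtain ⟨y, hy, z, hz, rfl⟩ := Submodule.mem_sup.mp hV_mem
  obtain ⟨c, rfl⟩ := Submodule.mem_span_singleton.mp hy
  rcases hE with ⟨hE_even, hE_unit⟩ | ⟨hE_odd, hE_unit⟩
  · have hiE : involute E = E := hE_even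
    refine ⟨hE_unit.mul hV_unit, 1, E * involute z - E * z, ?_, ?_⟩
    · exact Submodule.sub_mem _ (radG_mul_left 𝔽 p q r (involute_radG 𝔽 p q r hz) E)
        (radG_mul_left 𝔽 p q r hz E)
    · rw [map_mul, hiE, map_add, map_smul, map_one, one_smul, mul_add, mul_add]
      abel
  · have hiE : involute E = -E := hE_odd
    refine ⟨hE_unit.mul hV_unit, -1, E * z - E * involute z, ?_, ?_⟩
    · exact Submodule.sub_mem _ (radG_mul_left 𝔽 p q r hz E)
        (radG_mul_left 𝔽 p q r (involute_radG 𝔽 p q r hz) E)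
    · rw [map_mul, hiE, map_add, map_smul, map_one, neg_smul, one_smul, neg_mul, mul_add,
        mul_add]
      abel

open CliffordAlgebra in
lemma partA : gammaAd 𝔽 p q r (G0 𝔽 p q r) = {x : G 𝔽 p q r | IsUnit x} := by
  ext T
  constructor
  · exact fun h => h.1
  · intro hT
    refine ⟨hT, fun U hU => ?_⟩
    obtain ⟨c, rfl⟩ := Submodule.mem_span_singleton.mp hU
    have h1 : T * (c • 1) * Ring.inverse T = c • 1 := by
      rw [mul_smul_comm, mul_one, smul_mul_assoc, Ring.mul_inverse_cancel _ hT]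
    rw [h1]
    exact Submodule.smul_mem _ _ (Submodule.mem_span_singleton_self 1)

open CliffordAlgebra in
lemma partB (hodd : Odd (p + q + r)) :
    gammaAd 𝔽 p q r (Gn 𝔽 p q r) = {x : G 𝔽 p q r | IsUnit x} := by
  ext T
  constructor
  · exact fun h => h.1
  · intro hT
    refine ⟨hT, fun U hU => ?_⟩
    obtain ⟨c, rfl⟩ := Submodule.mem_span_singleton.mp hU
    have h1 : T * (c • eTop 𝔽 p q r) * Ring.inverse T = c • eTop 𝔽 p q r := by
      rw [mul_smul_comm, smul_mul_assoc, mul_eTop_odd 𝔽 p q r hodd T, mul_assoc,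
        Ring.mul_inverse_cancel _ hT, mul_one]
    rw [h1]
    exact Submodule.smul_mem _ _ (Submodule.mem_span_singleton_self _)

open CliffordAlgebra in
lemma partF (hn : 1 ≤ p + q + r) (heven : Even (p + q + r)) :
    gammaTw 𝔽 p q r (Gn 𝔽 p q r) = {x : G 𝔽 p q r | IsUnit x} := by
  ext T
  constructor
  · exact fun h => h.1
  · intro hT
    refine ⟨hT, fun U hU => ?_⟩
    obtain ⟨c, rfl⟩ := Submodule.mem_span_singleton.mp hU
    have h0 : involute T * eTop 𝔽 p q r = eTop 𝔽 p q r * T := by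
      rw [mul_eTop_even 𝔽 p q r heven hn (involute T), involute_involute]
    have h1 : involute T * (c • eTop 𝔽 p q r) * Ring.inverse T = c • eTop 𝔽 p q r := by
      rw [mul_smul_comm, smul_mul_assoc, h0, mul_assoc,
        Ring.mul_inverse_cancel _ hT, mul_one]
    rw [h1]
    exact Submodule.smul_mem _ _ (Submodule.mem_span_singleton_self _)

open CliffordAlgebra in
lemma partD : gammaTw 𝔽 p q r (G0 𝔽 p q r) = Epm 𝔽 p q r := by
  ext T
  constructor
  · rintro ⟨hT, hcond⟩
    have h1 := hcond 1 (Submodule.mem_span_singleton_self 1)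
    obtain ⟨c, hc⟩ := Submodule.mem_span_singleton.mp h1
    rw [mul_one] at hc
    have h2 : involute T = c • T := by
      have := congrArg (· * T) hc
      rw [smul_mul_assoc, one_mul, mul_assoc, Ring.inverse_mul_cancel _ hT, mul_one] at this
      exact this.symm
    have h3 : T = (c * c) • T := by
      have := congrArg (involute (Q := Q 𝔽 p q r)) h2
      rw [involute_involute, map_smul, h2, smul_smul] at this
      exact this
    have hc2 : c * c = 1 := by
      have h4 : (1 - c * c) • T = 0 := by
        rw [sub_smul, one_smul]
        nth_rewrite 1 [h3]
        abel
      rcases smul_eq_zero.mp h4 with h | h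
      · have : c * c = 1 := by linear_combination -h
        exact this
      · exact absurd h hT.ne_zero
    rcases mul_self_eq_one_iff.mp hc2 with h | h
    · left
      exact ⟨by rw [SetLike.mem_coe]; show involute T = T; rw [h2, h, one_smul], hT⟩
    · right
      exact ⟨by rw [SetLike.mem_coe]; show involute T = -T; rw [h2, h, neg_smul, one_smul], hT⟩
  · intro hT
    rcases hT with ⟨hmem, hunit⟩ | ⟨hmem, hunit⟩
    · have hiT : involute T = T := hmem
      refine ⟨hunit, fun U hU => ?_⟩
      obtain ⟨c, rfl⟩ := Submodule.mem_span_singleton.mp hU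
      have h1 : involute T * (c • 1) * Ring.inverse T = c • 1 := by
        rw [hiT, mul_smul_comm, mul_one, smul_mul_assoc, Ring.mul_inverse_cancel _ hunit]
      rw [h1]
      exact Submodule.smul_mem _ _ (Submodule.mem_span_singleton_self 1)
    · have hiT : involute T = -T := hmem
      refine ⟨hunit, fun U hU => ?_⟩
      obtain ⟨c, rfl⟩ := Submodule.mem_span_singleton.mp hU
      have h1 : involute T * (c • 1) * Ring.inverse T = (-c) • 1 := by
        rw [hiT, mul_smul_comm, mul_one, smul_mul_assoc, neg_mul,
          Ring.mul_inverse_cancel _ hunit, smul_neg, neg_smul]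
      rw [h1]
      exact Submodule.smul_mem _ _ (Submodule.mem_span_singleton_self 1)

open CliffordAlgebra in
lemma partC (hn : 1 ≤ p + q + r) (heven : Even (p + q + r)) :
    gammaAd 𝔽 p q r (Gn 𝔽 p q r)
      = Epm 𝔽 p q r * ux 𝔽 p q r ↑(G0 𝔽 p q r ⊔ radG 𝔽 p q r) := by
  ext T
  constructor
  · rintro ⟨hT, hcond⟩
    have h1 := hcond (eTop 𝔽 p q r) (Submodule.mem_span_singleton_self _)
    obtain ⟨μ, hμ⟩ := Submodule.mem_span_singleton.mp h1
    have h2 : T * eTop 𝔽 p q r = μ • (eTop 𝔽 p q r * T) := by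
      have := congrArg (· * T) hμ
      rw [smul_mul_assoc, mul_assoc, mul_assoc, Ring.inverse_mul_cancel _ hT, mul_one] at this
      exact this.symm
    have h3 : eTop 𝔽 p q r * (involute T - μ • T) = 0 := by
      rw [mul_sub, ← mul_eTop_even 𝔽 p q r heven hn T, h2, mul_smul_comm, sub_self]
    have h4 : involute T - μ • T ∈ radG 𝔽 p q r := eTop_ann 𝔽 p q r h3
    exact cond_to_mem 𝔽 p q r hT h4 (by abel)
  · intro hmem
    obtain ⟨hT, μ, ρ, hρ, hC⟩ := mem_to_cond 𝔽 p q r hmem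
    refine ⟨hT, fun U hU => ?_⟩
    obtain ⟨c, rfl⟩ := Submodule.mem_span_singleton.mp hU
    have hTe : T * eTop 𝔽 p q r = μ • (eTop 𝔽 p q r * T) := by
      rw [mul_eTop_even 𝔽 p q r heven hn T, hC, mul_add, mul_smul_comm,
        (eTop_mul_radG 𝔽 p q r hn hρ).1, add_zero]
    have h1 : T * (c • eTop 𝔽 p q r) * Ring.inverse T = (c * μ) • eTop 𝔽 p q r := by
      rw [mul_smul_comm, smul_mul_assoc, hTe, smul_mul_assoc, smul_smul, mul_assoc,
        Ring.mul_inverse_cancel _ hT, mul_one]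
    rw [h1]
    exact Submodule.smul_mem _ _ (Submodule.mem_span_singleton_self _)

open CliffordAlgebra in
lemma partE (hn : 1 ≤ p + q + r) (hodd : Odd (p + q + r)) :
    gammaTw 𝔽 p q r (Gn 𝔽 p q r)
      = Epm 𝔽 p q r * ux 𝔽 p q r ↑(G0 𝔽 p q r ⊔ radG 𝔽 p q r) := by
  ext T
  constructor
  · rintro ⟨hT, hcond⟩
    have h1 := hcond (eTop 𝔽 p q r) (Submodule.mem_span_singleton_self _)
    obtain ⟨μ, hμ⟩ := Submodule.mem_span_singleton.mp h1
    have h2 : involute T * eTop 𝔽 p q r = μ • (eTop 𝔽 p q r * T) := by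
      have := congrArg (· * T) hμ
      rw [smul_mul_assoc, mul_assoc, mul_assoc, Ring.inverse_mul_cancel _ hT, mul_one] at this
      exact this.symm
    have h3 : eTop 𝔽 p q r * (involute T - μ • T) = 0 := by
      rw [mul_sub, ← mul_eTop_odd 𝔽 p q r hodd (involute T), h2, mul_smul_comm, sub_self]
    have h4 : involute T - μ • T ∈ radG 𝔽 p q r := eTop_ann 𝔽 p q r h3
    exact cond_to_mem 𝔽 p q r hT h4 (by abel)
  · intro hmem
    obtain ⟨hT, μ, ρ, hρ, hC⟩ := mem_to_cond 𝔽 p q r hmem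
    refine ⟨hT, fun U hU => ?_⟩
    obtain ⟨c, rfl⟩ := Submodule.mem_span_singleton.mp hU
    have hTe : involute T * eTop 𝔽 p q r = μ • (eTop 𝔽 p q r * T) := by
      rw [mul_eTop_odd 𝔽 p q r hodd (involute T), hC, mul_add, mul_smul_comm,
        (eTop_mul_radG 𝔽 p q r hn hρ).1, add_zero]
    have h1 : involute T * (c • eTop 𝔽 p q r) * Ring.inverse T
        = (c * μ) • eTop 𝔽 p q r := by
      rw [mul_smul_comm, smul_mul_assoc, hTe, smul_mul_assoc, smul_smul, mul_assoc,
        Ring.mul_inverse_cancel _ hT, mul_one]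
    rw [h1]
    exact Submodule.smul_mem _ _ (Submodule.mem_span_singleton_self _)

/-- The groups `Γ^0`, `Γ^n`, `Γ̌^0`, `Γ̌^n`. -/
theorem stmt18 (hn : 1 ≤ p + q + r) :
    gammaAd 𝔽 p q r (G0 𝔽 p q r) = {x : G 𝔽 p q r | IsUnit x} ∧
    (Odd (p + q + r) → gammaAd 𝔽 p q r (Gn 𝔽 p q r) = {x : G 𝔽 p q r | IsUnit x}) ∧
    (Even (p + q + r) →
      gammaAd 𝔽 p q r (Gn 𝔽 p q r) = Epm 𝔽 p q r * ux 𝔽 p q r ↑(G0 𝔽 p q r ⊔ radG 𝔽 p q r)) ∧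
    gammaTw 𝔽 p q r (G0 𝔽 p q r) = Epm 𝔽 p q r ∧
    (Odd (p + q + r) →
      gammaTw 𝔽 p q r (Gn 𝔽 p q r) = Epm 𝔽 p q r * ux 𝔽 p q r ↑(G0 𝔽 p q r ⊔ radG 𝔽 p q r)) ∧
    (Even (p + q + r) → gammaTw 𝔽 p q r (Gn 𝔽 p q r) = {x : G 𝔽 p q r | IsUnit x}) := by
  exact ⟨partA 𝔽 p q r, fun hodd => partB 𝔽 p q r hodd,
    fun heven => partC 𝔽 p q r hn heven, partD 𝔽 p q r,
    fun hodd => partE 𝔽 p q r hn hodd, fun heven => partF 𝔽 p q r hn heven⟩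

end ClGA
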